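/- Let M be a matroid on a finite nonempty ground set L with rank function ρ. Then the minimum, over all distributions D on the bases of M, of the maximum satisfaction probability max_{u∈L} D[u] is equal to max{ (ρ(L) − ρ(X))/|L \ X| : X ⊊ L }. In particular this value is the maximum satisfaction probability of any minmax-Pareto distribution over the independent sets of M. -/

import Mathlib

open scoped Classical

variable {α : Type*}

/-- `p` is a probability distribution over the feasible solutions `sol`. -/
def IsDistrib [Fintype α] (sol : Finset α → Prop) (p : Finset α → ℝ) : Prop :=
  (∀ A, 0 ≤ p A) ∧ (∀ A, p A ≠ 0 → sol A) ∧ (∑ A : Finset α, p A) = 1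

/-- The satisfaction probability of individual `u` under the distribution `p`. -/
def sat [Fintype α] [DecidableEq α] (p : Finset α → ℝ) (u : α) : ℝ :=
  ∑ A : Finset α, if u ∈ A then p A else 0

/-- `D` is Pareto-efficient. -/
def ParetoEff [Fintype α] [DecidableEq α] (sol : Finset α → Prop) (D : Finset α → ℝ) : Prop :=
  IsDistrib sol D ∧
    ¬ ∃ D', IsDistrib sol D' ∧ (∀ u, sat D u ≤ sat D' u) ∧ ∃ u, sat D u < sat D' u

/-- `F` is minmax-Pareto. -/
def MinmaxPareto [Fintype α] [DecidableEq α] (sol : Finset α → Prop) (F : Finset α → ℝ) : Prop :=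
  ParetoEff sol F ∧
    ∀ D, ParetoEff sol D → ∀ u, sat D u < sat F u →
      ∃ v, sat F v < sat D v ∧ sat F u ≤ sat F v

/-- The rank of the finite set `X` in the matroid `M`. -/
noncomputable def rnk [Fintype α] (M : Matroid α) (X : Finset α) : ℕ :=
  (X.powerset.filter fun A : Finset α => M.Indep (A : Set α)).sup Finset.card

/-- `A` is a base of `M`: a maximal independent set. -/
def IsBaseF (M : Matroid α) (A : Finset α) : Prop :=
  M.Indep (A : Set α) ∧ ∀ B : Finset α, M.Indep (B : Set α) → A ⊆ B → A = B

set_option linter.unusedSectionVars false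
set_option linter.unusedVariables false

section Aux
variable [Fintype α] [DecidableEq α]

/-- finite sup attained -/
lemma exists_sup_eq [Nonempty α] (f : α → ℝ) : ∃ u0, (⨆ u, f u) = f u0 ∧ ∀ u, f u ≤ f u0 := by
  obtain ⟨u0, -, h⟩ := Finset.exists_max_image Finset.univ f ⟨Classical.arbitrary α, Finset.mem_univ _⟩
  have h' : ∀ u, f u ≤ f u0 := fun u => h u (Finset.mem_univ u)
  exact ⟨u0, le_antisymm (ciSup_le h') (le_ciSup (Set.Finite.bddAbove (Set.finite_range f)) u0), h'⟩

lemma sum_sat (p : Finset α → ℝ) (T : Finset α) :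
    ∑ w ∈ T, sat p w = ∑ A : Finset α, p A * ((A ∩ T).card : ℝ) := by
  unfold sat
  rw [Finset.sum_comm]
  refine Finset.sum_congr rfl fun A _ => ?_
  rw [Finset.sum_ite_mem, Finset.inter_comm]
  simp [Finset.sum_const, mul_comm]

lemma sat_nonneg {sol : Finset α → Prop} {p : Finset α → ℝ} (hp : IsDistrib sol p) (u : α) :
    0 ≤ sat p u := by
  refine Finset.sum_nonneg fun A _ => ?_
  split <;> simp [hp.1 A]

lemma sat_le_one {sol : Finset α → Prop} {p : Finset α → ℝ} (hp : IsDistrib sol p) (u : α) :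
    sat p u ≤ 1 := by
  rw [← hp.2.2]
  refine Finset.sum_le_sum fun A _ => ?_
  split <;> simp [hp.1 A]

end Aux

section Rank
variable [Fintype α] [DecidableEq α] {M : Matroid α}

lemma card_le_rnk {J X : Finset α} (hJX : J ⊆ X) (hJ : M.Indep (J : Set α)) :
    J.card ≤ rnk M X :=
  Finset.le_sup (Finset.mem_filter.2 ⟨Finset.mem_powerset.2 hJX, hJ⟩)

lemma rnk_eq_card_of_basis {J X : Finset α} (hJ : M.IsBasis (J : Set α) (X : Set α)) :
    rnk M X = J.card := by
  refine le_antisymm ?_ (card_le_rnk (by exact_mod_cast Finset.coe_subset.1 hJ.subset) hJ.indep)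
  · -- the sup is attained at some independent J' ⊆ X; extend to a basis; equicardinal
    unfold rnk
    refine Finset.sup_le fun J' hJ' => ?_
    rw [Finset.mem_filter, Finset.mem_powerset] at hJ'
    obtain ⟨J'', hJ''b, hsub⟩ := hJ'.2.subset_isBasis_of_subset
      (by exact_mod_cast Finset.coe_subset.2 hJ'.1) hJ.subset_ground
    have hcard : (J'' : Set α).encard = (J : Set α).encard := hJ''b.encard_eq_encard hJ
    have : (J' : Set α).encard ≤ (J'' : Set α).encard := Set.encard_le_encard hsub
    rw [hcard, Set.encard_coe_eq_coe_finsetCard, Set.encard_coe_eq_coe_finsetCard] at this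
    exact_mod_cast this

lemma isBaseF_iff {A : Finset α} :
    IsBaseF M A ↔ M.IsBase (A : Set α) := by
  rw [Matroid.isBase_iff_maximal_indep]
  constructor
  · rintro ⟨hA, hmax⟩
    refine ⟨hA, fun I hI hAI => ?_⟩
    have hIfin : I.Finite := Set.toFinite I
    have : A = hIfin.toFinset := hmax hIfin.toFinset (by rwa [Set.Finite.coe_toFinset])
      (by intro x hx; exact hIfin.mem_toFinset.2 (hAI hx))
    rw [this]; intro x hx; exact hIfin.mem_toFinset.2 hx
  · rintro ⟨hA, hmax⟩
    refine ⟨hA, fun B hB hAB => ?_⟩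
    have := hmax hB (Finset.coe_subset.2 hAB)
    exact hAB.antisymm (Finset.coe_subset.1 this)

end Rank
section Exchange
variable [Fintype α] [DecidableEq α] {M : Matroid α}

lemma exists_isBaseF (M : Matroid α) : ∃ B : Finset α, IsBaseF M B := by
  obtain ⟨B, hB⟩ := M.exists_isBase
  have hfin : B.Finite := Set.toFinite B
  refine ⟨hfin.toFinset, (isBaseF_iff).2 ?_⟩
  rwa [Set.Finite.coe_toFinset]

lemma isBaseF_card {B : Finset α} (hE : M.E = Set.univ) (hB : IsBaseF M B) :
    B.card = rnk M Finset.univ := by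
  have hBb := (isBaseF_iff).1 hB
  have : M.IsBasis (B : Set α) (Finset.univ : Finset α) := by
    have := hBb.isBasis_ground
    rwa [hE, ← Finset.coe_univ] at this
  rw [rnk_eq_card_of_basis this]

/-- key exchange: from a base `B` and an addable element `v ∈ X`, we can swap in `v`
for some `u ∈ B \ X` and stay a base. -/
lemma exchange_step (hE : M.E = Set.univ) {B X : Finset α} (hB : IsBaseF M B) {v : α}
    (hvX : v ∈ X) (hvB : v ∉ B) (hind : M.Indep ((insert v (B ∩ X) : Finset α) : Set α)) :
    ∃ u ∈ B, u ∉ X ∧ IsBaseF M (insert v (B.erase u)) := by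
  have hBb := (isBaseF_iff).1 hB
  obtain ⟨B'', hB''b, hIB'', hB''sub⟩ := hind.exists_isBase_subset_union_isBase hBb
  have hfin : B''.Finite := Set.toFinite B''
  set B2 : Finset α := hfin.toFinset with hB2
  have hB2coe : (B2 : Set α) = B'' := hfin.coe_toFinset
  have hB2card : B2.card = B.card := by
    have h1 := hB''b.encard_eq_encard_of_isBase hBb
    rw [← hB2coe, Set.encard_coe_eq_coe_finsetCard, Set.encard_coe_eq_coe_finsetCard] at h1
    exact_mod_cast h1
  have hvB2 : v ∈ B2 := by
    rw [← Finset.mem_coe, hB2coe]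
    exact hIB'' (by simp)
  have hBXB2 : B ∩ X ⊆ B2 := by
    intro x hx
    rw [← Finset.mem_coe, hB2coe]
    exact hIB'' (by rw [Finset.coe_insert]; exact Set.mem_insert_iff.2 (Or.inr hx))
  have hB2sub : B2 ⊆ insert v B := by
    intro x hx
    rw [← Finset.mem_coe, hB2coe] at hx
    have := hB''sub hx
    rw [Finset.mem_insert]
    simp only [Set.mem_union, Finset.coe_insert, Set.mem_insert_iff, Finset.mem_coe,
      Finset.mem_inter] at this
    tauto
  -- find the removed element u
  have hcardlt : B2.card < (insert v B).card := by
    rw [Finset.card_insert_of_notMem hvB, hB2card]; omega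
  have hnot : ¬ insert v B ⊆ B2 := fun h => absurd (Finset.card_le_card h) (by omega)
  obtain ⟨u, huvB, huB2⟩ := Finset.not_subset.1 hnot
  have huv : u ≠ v := fun h => huB2 (h ▸ hvB2)
  have huB : u ∈ B := by
    rcases Finset.mem_insert.1 huvB with h | h
    · exact absurd h huv
    · exact h
  have huX : u ∉ X := fun hX => huB2 (hBXB2 (Finset.mem_inter.2 ⟨huB, hX⟩))
  -- B2 = insert v (B.erase u)
  have hsub2 : B2 ⊆ insert v (B.erase u) := by
    intro x hx
    rcases Finset.mem_insert.1 (hB2sub hx) with h | h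
    · exact Finset.mem_insert.2 (Or.inl h)
    · exact Finset.mem_insert.2 (Or.inr (Finset.mem_erase.2 ⟨fun he => huB2 (he ▸ hx), h⟩))
  have hcard2 : (insert v (B.erase u)).card = B2.card := by
    rw [Finset.card_insert_of_notMem (fun h => hvB (Finset.mem_of_mem_erase h)),
      Finset.card_erase_of_mem huB, hB2card]
    have : 0 < B.card := Finset.card_pos.2 ⟨u, huB⟩
    omega
  have heq : B2 = insert v (B.erase u) := Finset.eq_of_subset_of_card_le hsub2 (le_of_eq hcard2)
  refine ⟨u, huB, huX, (isBaseF_iff).2 ?_⟩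
  rw [← heq, hB2coe]
  exact hB''b

end Exchange
section Distrib
variable [Fintype α] [DecidableEq α] {M : Matroid α}

noncomputable def Fobj [Fintype α] [DecidableEq α] (p : Finset α → ℝ) : ℝ :=
  ∑ u : α, (sat p u)^2

lemma continuous_sat (u : α) : Continuous (fun p : Finset α → ℝ => sat p u) := by
  unfold sat
  exact continuous_finset_sum _ fun A _ => by
    by_cases h : u ∈ A <;> simp [h] <;> [exact continuous_apply A; exact continuous_const]

lemma exists_min_distrib (M : Matroid α) :
    ∃ p, IsDistrib (IsBaseF M) p ∧ ∀ q, IsDistrib (IsBaseF M) q → Fobj p ≤ Fobj q := by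
  set P : Set (Finset α → ℝ) := {p | IsDistrib (IsBaseF M) p} with hP
  have hPalt : P = {p : Finset α → ℝ | ∀ A, 0 ≤ p A} ∩
      ({p | ∀ A, ¬ IsBaseF M A → p A = 0} ∩ {p | ∑ A : Finset α, p A = 1}) := by
    ext p
    simp only [hP, Set.mem_setOf_eq, Set.mem_inter_iff, IsDistrib]
    constructor
    · rintro ⟨h1, h2, h3⟩
      exact ⟨h1, fun A hA => by_contra fun h => hA (h2 A h), h3⟩
    · rintro ⟨h1, h2, h3⟩
      exact ⟨h1, fun A hpA => by_contra fun h => hpA (h2 A h), h3⟩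
  have hclosed : IsClosed P := by
    rw [hPalt]
    have h1 : IsClosed {p : Finset α → ℝ | ∀ A, 0 ≤ p A} := by
      have : {p : Finset α → ℝ | ∀ A, 0 ≤ p A} = ⋂ A, {p : Finset α → ℝ | 0 ≤ p A} := by
        ext p; simp
      rw [this]
      exact isClosed_iInter fun A => isClosed_le continuous_const (continuous_apply A)
    have h2 : IsClosed {p : Finset α → ℝ | ∀ A, ¬ IsBaseF M A → p A = 0} := by
      have : {p : Finset α → ℝ | ∀ A, ¬ IsBaseF M A → p A = 0}
          = ⋂ A, {p : Finset α → ℝ | ¬ IsBaseF M A → p A = 0} := by ext p; simp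
      rw [this]
      refine isClosed_iInter fun A => ?_
      by_cases h : IsBaseF M A
      · convert isClosed_univ using 1
        ext p; simp [h]
      · have : {p : Finset α → ℝ | ¬ IsBaseF M A → p A = 0}
            = (fun p : Finset α → ℝ => p A) ⁻¹' {0} := by ext p; simp [h]
        rw [this]
        exact isClosed_singleton.preimage (continuous_apply A)
    have h3 : IsClosed {p : Finset α → ℝ | ∑ A : Finset α, p A = 1} :=
      isClosed_eq (continuous_finset_sum _ fun A _ => continuous_apply A) continuous_const
    exact h1.inter (h2.inter h3)
  have hbdd : Bornology.IsBounded P := by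
    rw [Metric.isBounded_iff_subset_closedBall 0]
    refine ⟨1, fun p hp => ?_⟩
    rw [Metric.mem_closedBall, dist_zero_right]
    rw [pi_norm_le_iff_of_nonneg (by norm_num)]
    intro A
    rw [Real.norm_eq_abs, abs_le]
    obtain ⟨h1, -, h3⟩ := hp
    constructor
    · linarith [h1 A]
    · calc p A ≤ ∑ B : Finset α, p B :=
          Finset.single_le_sum (fun B _ => h1 B) (Finset.mem_univ A)
        _ = 1 := h3
  have hcompact : IsCompact P := Metric.isCompact_of_isClosed_isBounded hclosed hbdd
  have hne : P.Nonempty := by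
    obtain ⟨B0, hB0⟩ := exists_isBaseF M
    refine ⟨fun A => if A = B0 then 1 else 0, fun A => by positivity, fun A hA => ?_, by simp⟩
    by_cases h : A = B0
    · exact h ▸ hB0
    · simp [h] at hA
  have hcont : ContinuousOn Fobj P :=
    (continuous_finset_sum _ fun u _ => (continuous_sat u).pow 2).continuousOn
  obtain ⟨p, hpP, hmin⟩ := hcompact.exists_isMinOn hne hcont
  exact ⟨p, hpP, fun q hq => hmin hq⟩

lemma min_exchange {p : Finset α → ℝ} (hp : IsDistrib (IsBaseF M) p)
    (hmin : ∀ q, IsDistrib (IsBaseF M) q → Fobj p ≤ Fobj q)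
    {B : Finset α} (hpB : 0 < p B) {u v : α} (hu : u ∈ B) (hv : v ∉ B)
    (hB' : IsBaseF M (insert v (B.erase u))) : sat p u ≤ sat p v := by
  by_contra hlt
  push_neg at hlt
  set B' := insert v (B.erase u) with hB'def
  have hBB' : B' ≠ B := fun h => hv (h ▸ Finset.mem_insert_self v _)
  have huv : u ≠ v := fun h => hv (h ▸ hu)
  have huB' : u ∉ B' := by
    simp only [hB'def, Finset.mem_insert, Finset.mem_erase]
    push_neg
    exact ⟨huv, fun h => absurd rfl h⟩
  have hvB' : v ∈ B' := Finset.mem_insert_self v _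
  set ε : ℝ := min (p B) ((sat p u - sat p v)/2) with hε
  have hε0 : 0 < ε := lt_min hpB (by linarith)
  have hεpB : ε ≤ p B := min_le_left _ _
  have hεlt : ε ≤ (sat p u - sat p v)/2 := min_le_right _ _
  set e : Finset α → ℝ := fun A => (if A = B' then (1:ℝ) else 0) - (if A = B then 1 else 0)
    with he
  set q : Finset α → ℝ := fun A => p A + ε * e A with hq
  have hqd : IsDistrib (IsBaseF M) q := by
    refine ⟨fun A => ?_, fun A hA => ?_, ?_⟩
    · by_cases h1 : A = B'
      · rw [h1]
        have hqA : q B' = p B' + ε := by simp [hq, he, hBB']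
        have := hp.1 B'
        linarith
      · by_cases h2 : A = B
        · rw [h2]
          have hqA : q B = p B - ε := by
            have hne : B ≠ B' := Ne.symm hBB'
            simp only [hq, he, if_neg hne, if_pos rfl]
            simp
            ring
          linarith
        · have hqA : q A = p A := by simp [hq, he, h1, h2]
          have := hp.1 A
          linarith
    · by_cases h1 : A = B'
      · exact h1 ▸ hB'
      · by_cases h2 : A = B
        · exact h2 ▸ hp.2.1 B (ne_of_gt hpB)
        · refine hp.2.1 A ?_
          simpa [hq, he, h1, h2] using hA
    · have : ∑ A : Finset α, q A = (∑ A : Finset α, p A) + ε * ∑ A : Finset α, e A := by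
        rw [Finset.mul_sum, ← Finset.sum_add_distrib]
      rw [this, hp.2.2]
      have : ∑ A : Finset α, e A = 0 := by
        simp only [he, Finset.sum_sub_distrib, Finset.sum_ite_eq' Finset.univ,
          Finset.mem_univ, if_pos, sub_self]
      rw [this, mul_zero, add_zero]
  set δ : α → ℝ := fun w => (if w ∈ B' then (1:ℝ) else 0) - (if w ∈ B then 1 else 0) with hδ
  have hsatq : ∀ w, sat q w = sat p w + ε * δ w := by
    intro w
    have h1 : ∀ A : Finset α, (if w ∈ A then q A else 0)
        = (if w ∈ A then p A else 0) + ε * (if w ∈ A then e A else 0) := by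
      intro A; split <;> simp [hq]
    unfold sat
    rw [Finset.sum_congr rfl fun A _ => h1 A, Finset.sum_add_distrib, ← Finset.mul_sum]
    congr 1
    rw [mul_eq_mul_left_iff]
    left
    have h2 : ∀ C : Finset α, ∑ A : Finset α, (if w ∈ A then (if A = C then (1:ℝ) else 0) else 0)
        = if w ∈ C then 1 else 0 := by
      intro C
      rw [Finset.sum_eq_single C (fun A _ hA => by split <;> simp [hA]) (by simp)]
      split <;> simp
    simp only [he, hδ, ← h2]
    rw [← Finset.sum_sub_distrib]
    refine Finset.sum_congr rfl fun A _ => ?_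
    split <;> simp
  have hδu : δ u = -1 := by simp [hδ, hu, huB']
  have hδv : δ v = 1 := by simp [hδ, hv, hvB']
  have hδ0 : ∀ w, w ≠ u → w ≠ v → δ w = 0 := by
    intro w hwu hwv
    have : w ∈ B' ↔ w ∈ B := by
      simp only [hB'def, Finset.mem_insert, Finset.mem_erase]
      constructor
      · rintro (h | ⟨-, h⟩)
        · exact absurd h hwv
        · exact h
      · intro h; exact Or.inr ⟨hwu, h⟩
    by_cases h : w ∈ B
    · simp [hδ, h, this.2 h]
    · have h2 : w ∉ B' := fun hc => h (this.1 hc)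
      simp [hδ, h, h2]
  have hFq : Fobj q = Fobj p + ∑ w : α, (2 * ε * δ w * sat p w + ε^2 * (δ w)^2) := by
    unfold Fobj
    rw [← Finset.sum_add_distrib]
    refine Finset.sum_congr rfl fun w _ => ?_
    rw [hsatq w]; ring
  have hsum : ∑ w : α, (2 * ε * δ w * sat p w + ε^2 * (δ w)^2)
      = 2 * ε * (sat p v - sat p u) + 2 * ε^2 := by
    rw [← Finset.sum_subset (Finset.subset_univ ({u, v} : Finset α))
      (fun w _ hw => by
        simp only [Finset.mem_insert, Finset.mem_singleton] at hw
        push_neg at hw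
        rw [hδ0 w hw.1 hw.2]; ring)]
    rw [Finset.sum_pair huv, hδu, hδv]; ring
  have : Fobj q < Fobj p := by
    rw [hFq, hsum]
    nlinarith
  exact absurd (hmin q hqd) (not_le.2 this)

end Distrib
section Core
variable [Fintype α] [DecidableEq α] {M : Matroid α}

lemma sum_weighted_const {p : Finset α → ℝ} {g : Finset α → ℝ} {c : ℝ}
    (hsum : ∑ A : Finset α, p A = 1) (h : ∀ A, p A ≠ 0 → g A = c) :
    ∑ A : Finset α, p A * g A = c := by
  have : ∀ A : Finset α, p A * g A = p A * c := by
    intro A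
    by_cases hA : p A = 0
    · simp [hA]
    · rw [h A hA]
  rw [Finset.sum_congr rfl fun A _ => this A, ← Finset.sum_mul, hsum, one_mul]

lemma inter_compl_card (A X : Finset α) :
    ((A ∩ (Finset.univ \ X)).card : ℝ) = (A.card : ℝ) - ((A ∩ X).card : ℝ) := by
  have h1 : A ∩ (Finset.univ \ X) = A \ X := by
    ext x; simp
  have h2 : (A \ X).card + (A ∩ X).card = A.card := Finset.card_sdiff_add_card_inter A X
  rw [h1]
  push_cast [← h2]
  ring

lemma base_inter_indep {B X : Finset α} (hB : IsBaseF M B) :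
    M.Indep ((B ∩ X : Finset α) : Set α) := by
  refine hB.1.subset ?_
  rw [Finset.coe_inter]
  exact Set.inter_subset_left

lemma lower_bound [Nonempty α] (hE : M.E = Set.univ) {D : Finset α → ℝ}
    (hD : IsDistrib (IsBaseF M) D) {X : Finset α} (hX : X ⊂ Finset.univ) :
    ((rnk M Finset.univ : ℝ) - (rnk M X : ℝ)) / ((Finset.univ \ X).card : ℝ)
      ≤ ⨆ u : α, sat D u := by
  obtain ⟨u0, hsup, hmax⟩ := exists_sup_eq (sat D)
  have hcard : 0 < (Finset.univ \ X).card := by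
    obtain ⟨w, hw, hw'⟩ := Finset.exists_of_ssubset hX
    exact Finset.card_pos.2 ⟨w, Finset.mem_sdiff.2 ⟨hw, hw'⟩⟩
  rw [hsup, div_le_iff₀ (by exact_mod_cast hcard)]
  have h1 : ∑ w ∈ Finset.univ \ X, sat D w ≤ sat D u0 * ((Finset.univ \ X).card : ℝ) := by
    rw [mul_comm]
    calc ∑ w ∈ Finset.univ \ X, sat D w ≤ ∑ _w ∈ Finset.univ \ X, sat D u0 :=
          Finset.sum_le_sum fun w _ => hmax w
      _ = ((Finset.univ \ X).card : ℝ) * sat D u0 := by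
          rw [Finset.sum_const, nsmul_eq_mul]
  refine le_trans ?_ h1
  rw [sum_sat]
  have h2 : ∀ A : Finset α, D A ≠ 0 →
      ((rnk M Finset.univ : ℝ) - (rnk M X : ℝ)) ≤ ((A ∩ (Finset.univ \ X)).card : ℝ) := by
    intro A hA
    have hB := hD.2.1 A hA
    rw [inter_compl_card, isBaseF_card hE hB]
    have : (A ∩ X).card ≤ rnk M X := card_le_rnk (Finset.inter_subset_right) (base_inter_indep hB)
    have := (Nat.cast_le (α := ℝ)).2 this
    linarith
  calc (rnk M Finset.univ : ℝ) - (rnk M X : ℝ)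
      = ∑ A : Finset α, D A * ((rnk M Finset.univ : ℝ) - (rnk M X : ℝ)) := by
        rw [← Finset.sum_mul, hD.2.2, one_mul]
    _ ≤ ∑ A : Finset α, D A * ((A ∩ (Finset.univ \ X)).card : ℝ) := by
        refine Finset.sum_le_sum fun A _ => ?_
        by_cases hA : D A = 0
        · simp [hA]
        · exact mul_le_mul_of_nonneg_left (h2 A hA) (hD.1 A)

lemma rnk_attained (M : Matroid α) (X : Finset α) :
    ∃ J : Finset α, J ⊆ X ∧ M.Indep (J : Set α) ∧ J.card = rnk M X := by
  have hne : (X.powerset.filter fun A : Finset α => M.Indep (A : Set α)).Nonempty :=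
    ⟨∅, Finset.mem_filter.2 ⟨Finset.mem_powerset.2 (Finset.empty_subset X), by simp⟩⟩
  obtain ⟨J, hJmem, hJ⟩ := Finset.exists_mem_eq_sup _ hne Finset.card
  rw [Finset.mem_filter, Finset.mem_powerset] at hJmem
  exact ⟨J, hJmem.1, hJmem.2, hJ.symm⟩

lemma exists_opt [Nonempty α] (hE : M.E = Set.univ) :
    ∃ (p : Finset α → ℝ) (X : Finset α), IsDistrib (IsBaseF M) p ∧ X ⊂ Finset.univ ∧
      (⨆ u : α, sat p u)
        = ((rnk M Finset.univ : ℝ) - (rnk M X : ℝ)) / ((Finset.univ \ X).card : ℝ) := by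
  obtain ⟨p, hp, hmin⟩ := exists_min_distrib M
  obtain ⟨u0, hsup, hmax⟩ := exists_sup_eq (sat p)
  set θ : ℝ := sat p u0 with hθ
  set X : Finset α := Finset.univ.filter (fun w => sat p w < θ) with hXdef
  have hu0X : u0 ∉ X := by simp [hXdef, hθ]
  have hXss : X ⊂ Finset.univ :=
    Finset.ssubset_univ_iff.2 (fun h => hu0X (h ▸ Finset.mem_univ u0))
  have hXmem : ∀ w, w ∉ X → sat p w = θ := by
    intro w hw
    simp only [hXdef, Finset.mem_filter, Finset.mem_univ, true_and, not_lt] at hw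
    exact le_antisymm (hmax w) hw
  -- key claim
  have hkey : ∀ B : Finset α, p B ≠ 0 → ((B ∩ X).card : ℕ) = rnk M X := by
    intro B hpB
    have hB := hp.2.1 B hpB
    have hle : (B ∩ X).card ≤ rnk M X :=
      card_le_rnk (Finset.inter_subset_right) (base_inter_indep hB)
    by_contra hne
    have hlt : (B ∩ X).card < rnk M X := lt_of_le_of_ne hle hne
    obtain ⟨J, hJX, hJind, hJcard⟩ := rnk_attained M X
    -- augment B ∩ X from J
    have haug := (base_inter_indep hB (X := X)).augment hJind (by
      rw [Set.encard_coe_eq_coe_finsetCard, Set.encard_coe_eq_coe_finsetCard]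
      exact_mod_cast hJcard ▸ hlt)
    obtain ⟨v, hv, hvind⟩ := haug
    rw [Set.mem_diff, Finset.mem_coe, Finset.mem_coe] at hv
    have hvX : v ∈ X := hJX hv.1
    have hvB : v ∉ B := fun h => hv.2 (Finset.mem_inter.2 ⟨h, hvX⟩)
    have hvind' : M.Indep ((insert v (B ∩ X) : Finset α) : Set α) := by
      rwa [Finset.coe_insert]
    obtain ⟨u, huB, huX, hbase⟩ := exchange_step hE hB hvX hvB hvind'
    have hppos : 0 < p B := lt_of_le_of_ne (hp.1 B) (Ne.symm hpB)
    have hle2 : sat p u ≤ sat p v := min_exchange hp hmin hppos huB hvB hbase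
    have h3 : sat p u = θ := hXmem u huX
    have h4 : sat p v < θ := by
      simpa [hXdef] using hvX
    linarith
  -- compute the sum over the complement
  have hcard : 0 < ((Finset.univ \ X).card : ℝ) := by
    have : u0 ∈ Finset.univ \ X := Finset.mem_sdiff.2 ⟨Finset.mem_univ u0, hu0X⟩
    exact_mod_cast Finset.card_pos.2 ⟨u0, this⟩
  have hsum1 : ∑ w ∈ Finset.univ \ X, sat p w = ((Finset.univ \ X).card : ℝ) * θ := by
    rw [Finset.sum_congr rfl fun w hw => hXmem w (Finset.mem_sdiff.1 hw).2]
    rw [Finset.sum_const, nsmul_eq_mul]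
  have hsum2 : ∑ w ∈ Finset.univ \ X, sat p w
      = (rnk M Finset.univ : ℝ) - (rnk M X : ℝ) := by
    rw [sum_sat]
    refine sum_weighted_const hp.2.2 fun A hA => ?_
    have hB := hp.2.1 A hA
    rw [inter_compl_card, isBaseF_card hE hB]
    congr 1
    exact_mod_cast hkey A hA
  refine ⟨p, X, hp, hXss, ?_⟩
  rw [hsup]
  rw [hsum1] at hsum2
  rw [eq_div_iff (ne_of_gt hcard)]
  linarith [hsum2]

end Core
section Pareto
variable [Fintype α] [DecidableEq α] {M : Matroid α}

lemma sat_shift (p : Finset α → ℝ) (c : ℝ) (B' B : Finset α) (w : α) :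
    sat (fun A => p A + c * ((if A = B' then (1:ℝ) else 0) - (if A = B then 1 else 0))) w
      = sat p w + c * ((if w ∈ B' then (1:ℝ) else 0) - (if w ∈ B then 1 else 0)) := by
  unfold sat
  have h1 : ∀ A : Finset α,
      (if w ∈ A then p A + c * ((if A = B' then (1:ℝ) else 0) - (if A = B then 1 else 0)) else 0)
      = (if w ∈ A then p A else 0)
        + c * (if w ∈ A then ((if A = B' then (1:ℝ) else 0) - (if A = B then 1 else 0)) else 0) := by
    intro A; split <;> simp
  rw [Finset.sum_congr rfl fun A _ => h1 A, Finset.sum_add_distrib, ← Finset.mul_sum]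
  congr 1
  rw [mul_eq_mul_left_iff]
  left
  have h2 : ∀ C : Finset α, ∑ A : Finset α, (if w ∈ A then (if A = C then (1:ℝ) else 0) else 0)
      = if w ∈ C then 1 else 0 := by
    intro C
    rw [Finset.sum_eq_single C (fun A _ hA => by split <;> simp [hA]) (by simp)]
    split <;> simp
  rw [← h2 B', ← h2 B, ← Finset.sum_sub_distrib]
  refine Finset.sum_congr rfl fun A _ => ?_
  split <;> simp

lemma sum_shift (p : Finset α → ℝ) (c : ℝ) (B' B : Finset α) :
    ∑ A : Finset α, (p A + c * ((if A = B' then (1:ℝ) else 0) - (if A = B then 1 else 0)))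
      = ∑ A : Finset α, p A := by
  rw [Finset.sum_add_distrib, ← Finset.mul_sum]
  have : ∑ A : Finset α, ((if A = B' then (1:ℝ) else 0) - (if A = B then 1 else 0)) = 0 := by
    simp only [Finset.sum_sub_distrib, Finset.sum_ite_eq' Finset.univ,
      Finset.mem_univ, if_pos, sub_self]
  rw [this, mul_zero, add_zero]

lemma pareto_supported {F : Finset α → ℝ}
    (hF : ParetoEff (fun A : Finset α => M.Indep (A : Set α)) F) :
    IsDistrib (IsBaseF M) F := by
  refine ⟨hF.1.1, fun A0 hA0 => ?_, hF.1.2.2⟩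
  by_contra hnb
  have hind : M.Indep (A0 : Set α) := hF.1.2.1 A0 hA0
  have h2 : ¬ ∀ B : Finset α, M.Indep (B : Set α) → A0 ⊆ B → A0 = B :=
    fun h => hnb ⟨hind, h⟩
  push_neg at h2
  obtain ⟨B, hBind, hsub, hne⟩ := h2
  have hBA0 : B ≠ A0 := Ne.symm hne
  set c : ℝ := F A0 with hc
  have hc0 : 0 < c := lt_of_le_of_ne (hF.1.1 A0) (Ne.symm hA0)
  set D' : Finset α → ℝ :=
    fun A => F A + c * ((if A = B then (1:ℝ) else 0) - (if A = A0 then 1 else 0)) with hD'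
  have hD'distrib : IsDistrib (fun A : Finset α => M.Indep (A : Set α)) D' := by
    refine ⟨fun A => ?_, fun A hA => ?_, ?_⟩
    · by_cases h1 : A = B
      · rw [h1]
        have : D' B = F B + c := by simp [hD', hBA0]
        rw [this]
        have := hF.1.1 B
        linarith
      · by_cases h2 : A = A0
        · rw [h2]
          have : D' A0 = F A0 - c := by
            simp only [hD', if_neg (show A0 ≠ B from hne), if_pos rfl]
            ring_nf
            simp
          rw [this, hc]
          simp
        · have : D' A = F A := by simp [hD', h1, h2]
          rw [this]; exact hF.1.1 A
    · by_cases h1 : A = B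
      · exact h1 ▸ hBind
      · by_cases h2 : A = A0
        · exact h2 ▸ hind
        · refine hF.1.2.1 A ?_
          simpa [hD', h1, h2] using hA
    · rw [hD', sum_shift, hF.1.2.2]
  have hsat : ∀ w, sat D' w
      = sat F w + c * ((if w ∈ B then (1:ℝ) else 0) - (if w ∈ A0 then 1 else 0)) := by
    intro w; rw [hD']; exact sat_shift F c B A0 w
  have hdom : ∀ w, sat F w ≤ sat D' w := by
    intro w
    rw [hsat w]
    have : (0:ℝ) ≤ (if w ∈ B then (1:ℝ) else 0) - (if w ∈ A0 then 1 else 0) := by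
      by_cases h : w ∈ A0
      · simp [h, hsub h]
      · simp [h]
        split <;> norm_num
    nlinarith
  obtain ⟨w0, hw0B, hw0A0⟩ := Finset.exists_of_ssubset (lt_of_le_of_ne hsub hne)
  have hstrict : sat F w0 < sat D' w0 := by
    rw [hsat w0]
    simp only [if_pos hw0B, if_neg hw0A0, sub_zero]
    linarith
  exact hF.2 ⟨D', hD'distrib, hdom, w0, hstrict⟩

lemma base_distrib_pareto (hE : M.E = Set.univ) {D : Finset α → ℝ}
    (hD : IsDistrib (IsBaseF M) D) :
    ParetoEff (fun A : Finset α => M.Indep (A : Set α)) D := by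
  refine ⟨⟨hD.1, fun A hA => (hD.2.1 A hA).1, hD.2.2⟩, ?_⟩
  rintro ⟨D', hD', hdom, u1, hstrict⟩
  have h1 : ∑ u : α, sat D u = (rnk M Finset.univ : ℝ) := by
    rw [show (Finset.univ : Finset α) = Finset.univ from rfl, sum_sat D Finset.univ]
    refine sum_weighted_const hD.2.2 fun A hA => ?_
    rw [Finset.inter_univ]
    exact_mod_cast isBaseF_card hE (hD.2.1 A hA)
  have h2 : ∑ u : α, sat D' u ≤ (rnk M Finset.univ : ℝ) := by
    rw [sum_sat D' Finset.univ]
    calc ∑ A : Finset α, D' A * ((A ∩ Finset.univ).card : ℝ)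
        ≤ ∑ A : Finset α, D' A * (rnk M Finset.univ : ℝ) := by
          refine Finset.sum_le_sum fun A _ => ?_
          by_cases hA : D' A = 0
          · simp [hA]
          · refine mul_le_mul_of_nonneg_left ?_ (hD'.1 A)
            rw [Finset.inter_univ]
            exact_mod_cast card_le_rnk (Finset.subset_univ A) (hD'.2.1 A hA)
      _ = (rnk M Finset.univ : ℝ) := by rw [← Finset.sum_mul, hD'.2.2, one_mul]
  have h3 : ∑ u : α, sat D u < ∑ u : α, sat D' u :=
    Finset.sum_lt_sum (fun i _ => hdom i) ⟨u1, Finset.mem_univ u1, hstrict⟩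
  linarith

end Pareto

/-- Let `M` be a matroid on a finite nonempty ground set (the whole type `α`).  The
minimum, over all distributions `D` on the bases of `M`, of the maximum satisfaction
probability `⨆ u, sat D u` equals
`max { (rnk M univ − rnk M X) / |univ \ X| : X ⊊ univ }`; and this value is the maximum
satisfaction probability of any minmax-Pareto distribution over the independent sets
of `M`. -/
theorem minmax_value_matroid [Fintype α] [DecidableEq α] [Nonempty α]
    (M : Matroid α) (hE : M.E = Set.univ) :
    IsLeast
      {x : ℝ | ∃ D, IsDistrib (IsBaseF M) D ∧ x = ⨆ u : α, sat D u}
      (sSup {x : ℝ | ∃ X : Finset α, X ⊂ Finset.univ ∧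
        x = ((rnk M Finset.univ : ℝ) - (rnk M X : ℝ)) / ((Finset.univ \ X).card : ℝ)}) ∧
    ∀ F, MinmaxPareto (fun A : Finset α => M.Indep (A : Set α)) F →
      (⨆ u : α, sat F u) =
        sSup {x : ℝ | ∃ X : Finset α, X ⊂ Finset.univ ∧
          x = ((rnk M Finset.univ : ℝ) - (rnk M X : ℝ)) / ((Finset.univ \ X).card : ℝ)} := by
  set R : Set ℝ := {x : ℝ | ∃ X : Finset α, X ⊂ Finset.univ ∧
    x = ((rnk M Finset.univ : ℝ) - (rnk M X : ℝ)) / ((Finset.univ \ X).card : ℝ)} with hR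
  have hRfin : R.Finite := by
    have hsub : R ⊆ (fun X : Finset α => ((rnk M Finset.univ : ℝ) - (rnk M X : ℝ))
        / ((Finset.univ \ X).card : ℝ)) '' Set.univ := by
      rintro x ⟨X, hX, rfl⟩
      exact ⟨X, trivial, rfl⟩
    exact (Set.finite_univ.image _).subset hsub
  have hRne : R.Nonempty :=
    ⟨_, ∅, Finset.empty_ssubset.2 Finset.univ_nonempty, rfl⟩
  have hbdd : BddAbove R := hRfin.bddAbove
  have hlb : ∀ D : Finset α → ℝ, IsDistrib (IsBaseF M) D → sSup R ≤ ⨆ u : α, sat D u := by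
    intro D hD
    refine csSup_le hRne ?_
    rintro r ⟨X, hX, rfl⟩
    exact lower_bound hE hD hX
  obtain ⟨p, X0, hp, hX0, hpval⟩ := exists_opt hE
  have hmemR : (⨆ u : α, sat p u) ∈ R := ⟨X0, hX0, hpval⟩
  have heq : sSup R = ⨆ u : α, sat p u :=
    le_antisymm (hlb p hp) (le_csSup hbdd hmemR)
  constructor
  · constructor
    · exact ⟨p, hp, heq⟩
    · rintro x ⟨D, hD, rfl⟩
      exact hlb D hD
  · intro F hF
    have hFbase : IsDistrib (IsBaseF M) F := pareto_supported hF.1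
    have hge : sSup R ≤ ⨆ u : α, sat F u := hlb F hFbase
    have hDpareto := base_distrib_pareto hE hp
    by_contra hne2
    have hlt : sSup R < ⨆ u : α, sat F u := lt_of_le_of_ne hge (fun h => hne2 h.symm)
    obtain ⟨u0, hFsup, hFmax⟩ := exists_sup_eq (sat F)
    obtain ⟨v0, hpsup, hpmax⟩ := exists_sup_eq (sat p)
    have hpv0 : sat p v0 = sSup R := by rw [heq, hpsup]
    have h1 : sat p u0 < sat F u0 := by
      calc sat p u0 ≤ sat p v0 := hpmax u0
        _ = sSup R := hpv0
        _ < ⨆ u : α, sat F u := hlt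
        _ = sat F u0 := hFsup
    obtain ⟨v, hv1, hv2⟩ := hF.2 p hDpareto u0 h1
    have h2 : sat p v ≤ sSup R := hpv0 ▸ hpmax v
    have h3 : (⨆ u : α, sat F u) = sat F u0 := hFsup
    linarith
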